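/- arXiv:1405.1614 — 2 statements merged into one kernel-verified Lean document; each statement's English description precedes it below -/
import Mathlib

section
/- Let A be an n×n matrix over a quaternion algebra H, and let b ∈ H. If the i-th row of A is replaced by b times that row (left multiplication entrywise), then the i-th row immanant of the resulting matrix equals b · rImmᵢ(A). -/
open Quaternion Equiv

variable {F : Type*} [Field F] {a b : F} {n : ℕ}

/-- The cycle (orbit) of `x` under `σ`, listed as `x, σ x, σ² x, …`. -/
noncomputable def orbitList (σ : Equiv.Perm (Fin n)) (x : Fin n) : List (Fin n) :=
  (List.range (Function.minimalPeriod σ x)).map fun m => (σ ^ m) x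

/-- Left-ordered list of indices: first the cycle of `i`, then the remaining cycles,
each starting at its smallest element, ordered increasingly by their smallest elements. -/
noncomputable def rowList (σ : Equiv.Perm (Fin n)) (i : Fin n) : List (Fin n) :=
  (List.finRange n).foldl (fun acc x => if x ∈ acc then acc else acc ++ orbitList σ x)
    (orbitList σ i)

/-- Right-ordered list of indices for the column immanant: the cycle of `j` rightmost,
remaining cycles prepended in order, so they appear in decreasing order of smallest
elements from the left. -/
noncomputable def colList (σ : Equiv.Perm (Fin n)) (j : Fin n) : List (Fin n) :=
  (List.finRange n).foldl (fun acc x => if x ∈ acc then acc else orbitList σ x ++ acc)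
    (orbitList σ j)

/-- The `i`th row immanant of a matrix over the quaternion algebra `ℍ[F,a,b]`. -/
noncomputable def rImm (χ : Equiv.Perm (Fin n) → F) (A : Matrix (Fin n) (Fin n) ℍ[F,a,b])
    (i : Fin n) : ℍ[F,a,b] :=
  ∑ σ : Equiv.Perm (Fin n),
    algebraMap F ℍ[F,a,b] (χ σ) * ((rowList σ i).map fun x => A x (σ x)).prod

/-- The `j`th column immanant of a matrix over the quaternion algebra `ℍ[F,a,b]`. -/
noncomputable def cImm (χ : Equiv.Perm (Fin n) → F) (A : Matrix (Fin n) (Fin n) ℍ[F,a,b])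
    (j : Fin n) : ℍ[F,a,b] :=
  ∑ σ : Equiv.Perm (Fin n),
    algebraMap F ℍ[F,a,b] (χ σ) * ((colList σ j).map fun x => A x (σ x)).prod

section Aux
variable {n : ℕ}

lemma minPos (σ : Equiv.Perm (Fin n)) (x : Fin n) : 0 < Function.minimalPeriod σ x := by
  apply Function.minimalPeriod_pos_of_mem_periodicPts
  exact ⟨orderOf σ, orderOf_pos σ, by
    simp [Function.IsPeriodicPt, Function.IsFixedPt, pow_orderOf_eq_one]
    rw [Equiv.Perm.iterate_eq_pow, pow_orderOf_eq_one, Equiv.Perm.one_apply]⟩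

lemma mem_orbitList {σ : Equiv.Perm (Fin n)} {x y : Fin n} :
    y ∈ orbitList σ x ↔ ∃ m : ℕ, (σ ^ m) x = y := by
  simp only [orbitList, List.mem_map, List.mem_range]
  constructor
  · rintro ⟨m, _, rfl⟩; exact ⟨m, rfl⟩
  · rintro ⟨m, rfl⟩
    exact ⟨m % _, Nat.mod_lt _ (minPos σ x), by
      rw [← Equiv.Perm.iterate_eq_pow, ← Equiv.Perm.iterate_eq_pow,
        Function.iterate_mod_minimalPeriod_eq]⟩

lemma orbit_symm {σ : Equiv.Perm (Fin n)} {x y : Fin n} (h : ∃ m, (σ ^ m) x = y) :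
    ∃ m, (σ ^ m) y = x := by
  obtain ⟨m, rfl⟩ := h
  refine ⟨m * (orderOf σ - 1), ?_⟩
  rw [← Equiv.Perm.mul_apply, ← pow_add, ← Nat.mul_succ, Nat.sub_one,
    Nat.succ_pred_eq_of_pos (orderOf_pos σ), mul_comm, pow_mul, pow_orderOf_eq_one, one_pow,
    Equiv.Perm.one_apply]

lemma foldl_extra (σ : Equiv.Perm (Fin n)) (i : Fin n) :
    ∀ (L acc : List (Fin n)), (∀ y ∈ orbitList σ i, y ∈ acc) →
    ∃ e : List (Fin n),
      L.foldl (fun acc x => if x ∈ acc then acc else acc ++ orbitList σ x) acc = acc ++ e ∧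
      i ∉ e := by
  intro L
  induction L with
  | nil => exact fun acc _ => ⟨[], by simp, by simp⟩
  | cons x L ih =>
    intro acc hacc
    simp only [List.foldl_cons]
    by_cases hx : x ∈ acc
    · simpa [hx] using ih acc hacc
    · simp only [hx, if_false]
      obtain ⟨e, he, hie⟩ :=
        ih (acc ++ orbitList σ x) (fun y hy => List.mem_append_left _ (hacc y hy))
      refine ⟨orbitList σ x ++ e, by rw [he, List.append_assoc], ?_⟩
      simp only [List.mem_append, not_or]
      refine ⟨fun hi => hx ?_, hie⟩
      exact hacc x (mem_orbitList.mpr (orbit_symm (mem_orbitList.mp hi)))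

lemma orbitList_eq_cons (σ : Equiv.Perm (Fin n)) (i : Fin n) :
    ∃ t, orbitList σ i = i :: t ∧ i ∉ t := by
  obtain ⟨k, hk⟩ : ∃ k, Function.minimalPeriod σ i = k + 1 :=
    ⟨_, (Nat.succ_pred_eq_of_pos (minPos σ i)).symm⟩
  refine ⟨(List.range k).map fun m => (σ ^ (m + 1)) i, ?_, ?_⟩
  · rw [orbitList, hk, List.range_succ_eq_map]
    simp [List.map_map, Function.comp_def]
  · simp only [List.mem_map, List.mem_range, not_exists]
    rintro m ⟨hm, hfix⟩
    exact Function.not_isPeriodicPt_of_pos_of_lt_minimalPeriod (Nat.succ_ne_zero m)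
      (by omega) hfix

end Aux

/-- Left multiplying the `i`th row of `A` by `b' ∈ ℍ[F,a,b]` multiplies the `i`th row
immanant by `b'` on the left. -/
theorem rImm_row_smul (χ : Equiv.Perm (Fin n) → F)
    (A : Matrix (Fin n) (Fin n) ℍ[F,a,b]) (i : Fin n) (b' : ℍ[F,a,b]) :
    rImm χ (A.updateRow i fun l => b' * A i l) i = b' * rImm χ A i := by
  unfold rImm
  rw [Finset.mul_sum]
  refine Finset.sum_congr rfl fun σ _ => ?_
  obtain ⟨t0, ht0, hit0⟩ := orbitList_eq_cons σ i
  obtain ⟨e, he, hie⟩ := foldl_extra σ i (List.finRange n) (orbitList σ i) (fun y hy => hy)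
  have hrow : rowList σ i = i :: (t0 ++ e) := by
    rw [rowList, he, ht0, List.cons_append]
  have hni : i ∉ t0 ++ e := by simp [hit0, hie]
  rw [hrow]
  simp only [List.map_cons, List.prod_cons, Matrix.updateRow_self]
  have hmap : (t0 ++ e).map
      (fun x => (A.updateRow i fun l => b' * A i l) x (σ x)) =
      (t0 ++ e).map fun x => A x (σ x) := by
    refine List.map_congr_left fun x hx => ?_
    rw [Matrix.updateRow_ne (fun h : x = i => hni (h ▸ hx))]
  rw [hmap, mul_assoc b', ← mul_assoc, Algebra.commutes, mul_assoc]
end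

section
/- Let A be an n×n matrix over a quaternion algebra H, and let b ∈ H. If the j-th column of A is replaced by that column times b (right multiplication entrywise), then the j-th column immanant of the resulting matrix equals cImm_j(A) · b. -/
open Quaternion Equiv

variable {F : Type*} [Field F] {a b : F} {n : ℕ}

section Aux
open Function

variable {σ : Equiv.Perm (Fin n)} {x y : Fin n}

lemma perm_mem_periodicPts (σ : Equiv.Perm (Fin n)) (x : Fin n) :
    x ∈ periodicPts σ :=
  ⟨orderOf σ, orderOf_pos σ, by
    simp [IsPeriodicPt, IsFixedPt, ← Equiv.Perm.coe_pow, pow_orderOf_eq_one]⟩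

lemma minimalPeriod_perm_pos (σ : Equiv.Perm (Fin n)) (x : Fin n) :
    0 < minimalPeriod σ x :=
  minimalPeriod_pos_of_mem_periodicPts (perm_mem_periodicPts σ x)

lemma mem_orbitList_s5 : y ∈ orbitList σ x ↔ σ.SameCycle x y := by
  simp only [orbitList, List.mem_map, List.mem_range]
  constructor
  · rintro ⟨m, -, rfl⟩
    exact ⟨(m : ℤ), by simp [zpow_natCast]⟩
  · intro h
    obtain ⟨i, -, rfl⟩ := h.exists_pow_eq'
    refine ⟨i % minimalPeriod σ x, Nat.mod_lt _ (minimalPeriod_perm_pos σ x), ?_⟩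
    show (σ ^ (i % minimalPeriod σ x)) x = (σ ^ i) x
    exact Function.iterate_mod_minimalPeriod_eq

lemma colList_decomp (σ : Equiv.Perm (Fin n)) (j : Fin n) :
    ∃ P : List (Fin n), colList σ j = P ++ orbitList σ j ∧
      ∀ y ∈ P, ¬ σ.SameCycle j y := by
  suffices h : ∀ (l : List (Fin n)) (acc : List (Fin n)),
      (∃ P, acc = P ++ orbitList σ j ∧ ∀ y ∈ P, ¬ σ.SameCycle j y) →
      ∃ P, l.foldl (fun acc x => if x ∈ acc then acc else orbitList σ x ++ acc) acc
        = P ++ orbitList σ j ∧ ∀ y ∈ P, ¬ σ.SameCycle j y by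
    exact h _ _ ⟨[], rfl, by simp⟩
  intro l
  induction l with
  | nil => intro acc h; simpa using h
  | cons x l ih =>
    intro acc h
    obtain ⟨P, rfl, hP⟩ := h
    simp only [List.foldl_cons]
    by_cases hx : x ∈ P ++ orbitList σ j
    · rw [if_pos hx]; exact ih _ ⟨P, rfl, hP⟩
    · rw [if_neg hx]
      refine ih _ ⟨orbitList σ x ++ P, by simp, ?_⟩
      intro y hy hjy
      rcases List.mem_append.1 hy with hy | hy
      · have hxy := mem_orbitList_s5.1 hy
        exact hx (List.mem_append.2 (Or.inr (mem_orbitList_s5.2 (hjy.trans hxy.symm))))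
      · exact hP y hy hjy

lemma orbitList_eq_append (σ : Equiv.Perm (Fin n)) (j : Fin n) :
    orbitList σ j
      = ((List.range (minimalPeriod σ j - 1)).map fun m => (σ ^ m) j)
        ++ [(σ ^ (minimalPeriod σ j - 1)) j] := by
  obtain ⟨t, ht⟩ : ∃ t, minimalPeriod ⇑σ j = t + 1 :=
    ⟨minimalPeriod ⇑σ j - 1, by have := minimalPeriod_perm_pos σ j; omega⟩
  rw [orbitList, ht]
  simp [List.range_succ]

lemma colList_prod_updateColumn (σ : Equiv.Perm (Fin n)) (j : Fin n)
    (A : Matrix (Fin n) (Fin n) ℍ[F,a,b]) (b' : ℍ[F,a,b]) :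
    ((colList σ j).map fun x =>
        (A.updateCol j fun l => A l j * b') x (σ x)).prod
      = ((colList σ j).map fun x => A x (σ x)).prod * b' := by
  obtain ⟨P, hP, hPj⟩ := colList_decomp σ j
  set T := minimalPeriod σ j with hTdef
  have hTpos : 0 < T := minimalPeriod_perm_pos σ j
  set B := A.updateCol j fun l => A l j * b' with hB
  have hlast : σ ((σ ^ (T - 1)) j) = j := by
    have h1 : σ ((σ ^ (T - 1)) j) = (σ ^ T) j := by
      have h2 : T - 1 + 1 = T := by omega
      rw [← Equiv.Perm.mul_apply, ← pow_succ', h2]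
    rw [h1]
    rw [Equiv.Perm.coe_pow]; exact isPeriodicPt_minimalPeriod σ j
  have hPne : ∀ x ∈ P, B x (σ x) = A x (σ x) := by
    intro x hx
    have hσx : σ x ≠ j := by
      intro h
      apply hPj x hx
      exact ⟨(-1 : ℤ), by simp [← h]⟩
    rw [hB, Matrix.updateCol_apply, if_neg hσx]
  have hmid : ∀ k ∈ List.range (T - 1),
      B ((σ ^ k) j) (σ ((σ ^ k) j)) = A ((σ ^ k) j) (σ ((σ ^ k) j)) := by
    intro k hk
    rw [List.mem_range] at hk
    have hσx : σ ((σ ^ k) j) ≠ j := by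
      intro h
      have h1 : (σ ^ (k + 1)) j = j := by
        rw [pow_succ', Equiv.Perm.mul_apply]; exact h
      have h2 : IsPeriodicPt σ (k + 1) j := by
        show (⇑σ)^[k + 1] j = j; rw [← Equiv.Perm.coe_pow]; exact h1
      exact not_isPeriodicPt_of_pos_of_lt_minimalPeriod (Nat.succ_ne_zero k)
        (by omega) h2
    rw [hB, Matrix.updateCol_apply, if_neg hσx]
  have hBlast : B ((σ ^ (T - 1)) j) (σ ((σ ^ (T - 1)) j))
      = A ((σ ^ (T - 1)) j) (σ ((σ ^ (T - 1)) j)) * b' := by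
    rw [hlast, hB, Matrix.updateCol_self]
  rw [hP, orbitList_eq_append σ j, ← hTdef]
  simp only [List.map_append, List.prod_append, List.map_singleton,
    List.prod_singleton, List.map_map, Function.comp_def]
  rw [List.map_congr_left hPne, List.map_congr_left hmid, hBlast, mul_assoc, mul_assoc]

end Aux

/-- Right multiplying the `j`th column of `A` by `b' ∈ ℍ[F,a,b]` multiplies the `j`th
column immanant by `b'` on the right. -/
theorem cImm_col_smul (χ : Equiv.Perm (Fin n) → F)
    (A : Matrix (Fin n) (Fin n) ℍ[F,a,b]) (j : Fin n) (b' : ℍ[F,a,b]) :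
    cImm χ (A.updateCol j fun l => A l j * b') j = cImm χ A j * b' := by
  rw [cImm, cImm, Finset.sum_mul]
  exact Finset.sum_congr rfl fun σ _ => by
    rw [colList_prod_updateColumn, mul_assoc]
end
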